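/- The cosine class COS(ℝ) of the additive group of real numbers equals { x ↦ cos(2πyx) : y ∈ [0, ∞) } (viewed as complex-valued functions on ℝ), and the assignment y ↦ (x ↦ cos(2πyx)) is injective on [0, ∞). -/

import Mathlib

open Real intervalIntegral

section Alg
variable {φ : ℝ → ℂ} {a : ℝ}

private lemma keyAux (key : ∀ x y : ℝ, φ x * φ y = (φ (x + y) + φ (x - y)) / 2)
    (u v s d : ℝ) (hs : u + v = s) (hd : u - v = d) :
    φ u * φ v = (φ s + φ d) / 2 := by rw [← hs, ← hd]; exact key u v

private lemma Lii (key : ∀ x y : ℝ, φ x * φ y = (φ (x + y) + φ (x - y)) / 2) (x y : ℝ) :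
    φ (x + y + a) - φ (x + y) * φ a
      = (φ (x + a) - φ x * φ a) * φ y + φ x * (φ (y + a) - φ y * φ a) := by
  have h2 := keyAux key (x + a) y (x + y + a) (x - y + a) (by ring) (by ring)
  have h3b := keyAux key x (y + a) (x + y + a) (x - y - a) (by ring) (by ring)
  have h5 := keyAux key x y (x + y) (x - y) (by ring) (by ring)
  have hxmya := keyAux key (x - y) a (x - y + a) (x - y - a) (by ring) (by ring)
  linear_combination (-1 : ℂ) * h2 - h3b + 2 * φ a * h5 + hxmya

private lemma Liv (key : ∀ x y : ℝ, φ x * φ y = (φ (x + y) + φ (x - y)) / 2)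
    (h0 : φ 0 = 1) (hev : ∀ x : ℝ, φ (-x) = φ x) (x y : ℝ) :
    (φ (x + a) - φ x * φ a) * (φ (y + a) - φ y * φ a)
      = (φ a ^ 2 - 1) * (φ (x + y) - φ x * φ y) := by
  have h1 := keyAux key (x + a) (y + a) (x + y + 2*a) (x - y) (by ring) (by ring)
  have h2 := keyAux key (x + a) y (x + y + a) (x - y + a) (by ring) (by ring)
  have h3 := keyAux key (y + a) x (x + y + a) (y - x + a) (by ring) (by ring)
  have h4 := keyAux key a a (2*a) 0 (by ring) (by ring)
  rw [h0] at h4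
  have h5 := keyAux key x y (x + y) (x - y) (by ring) (by ring)
  have h6 := keyAux key (x + y) (2*a) (x + y + 2*a) (x + y - 2*a) (by ring) (by ring)
  have h7 := keyAux key (x - y) (2*a) (x - y + 2*a) (x - y - 2*a) (by ring) (by ring)
  have h8 := keyAux key (x + y + a) a (x + y + 2*a) (x + y) (by ring) (by ring)
  have h9 := keyAux key (x - y + a) a (x - y + 2*a) (x - y) (by ring) (by ring)
  have h10 := keyAux key (y - x + a) a (y - x + 2*a) (y - x) (by ring) (by ring)
  have he1 : φ (y - x) = φ (x - y) := by
    have := hev (x - y); rw [show -(x - y) = y - x by ring] at this; exact this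
  have he2 : φ (y - x + 2*a) = φ (x - y - 2*a) := by
    have := hev (x - y - 2*a); rw [show -(x - y - 2*a) = y - x + 2*a by ring] at this
    exact this
  linear_combination h1 - φ a * h2 - φ a * h3 + (2 * φ x * φ y - φ (x + y)) * h4
    + φ (2*a) * h5 + h7/2 - h8 - h9/2 - h10/2 - he1/4 - he2/4

end Alg

private lemma expClass (E : ℝ → ℂ) (hc : Continuous E) (h0 : E 0 = 1)
    (hm : ∀ x y : ℝ, E (x + y) = E x * E y) :
    ∃ k : ℂ, ∀ x : ℝ, E x = Complex.exp (k * x) := by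
  -- choose δ with ‖E t - 1‖ ≤ 1/2 on [0, δ]
  obtain ⟨δ', hδ'pos, hδ'⟩ := Metric.continuousAt_iff.1 hc.continuousAt (1/2) (by norm_num)
  set δ : ℝ := δ'/2 with hδdef
  have hδpos : 0 < δ := by positivity
  have hsmall : ∀ t ∈ Set.uIoc (0:ℝ) δ, ‖E t - 1‖ ≤ 1/2 := by
    intro t ht
    rw [Set.uIoc_of_le hδpos.le] at ht
    have : dist t 0 < δ' := by
      rw [Real.dist_eq, sub_zero, abs_of_pos ht.1]
      calc t ≤ δ := ht.2
      _ < δ' := by rw [hδdef]; linarith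
    have := hδ' this
    rw [dist_eq_norm, h0] at this
    exact this.le
  set c₀ : ℂ := ∫ t in (0:ℝ)..δ, E t with hc₀def
  have hint : ∀ u v : ℝ, IntervalIntegrable E MeasureTheory.volume u v :=
    fun u v => hc.intervalIntegrable u v
  have hc₀ne : c₀ ≠ 0 := by
    have h1 : ‖c₀ - δ‖ ≤ 1/2 * |δ - 0| := by
      have : c₀ - (δ : ℂ) = ∫ t in (0:ℝ)..δ, (E t - 1) := by
        rw [integral_sub (hint 0 δ) intervalIntegrable_const, integral_const]
        simp [hc₀def]
      rw [this]
      exact intervalIntegral.norm_integral_le_of_norm_le_const hsmall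
    intro h
    rw [h, zero_sub, norm_neg, sub_zero, abs_of_pos hδpos] at h1
    rw [Complex.norm_real, Real.norm_eq_abs, abs_of_pos hδpos] at h1
    linarith
  -- primitive
  set F : ℝ → ℂ := fun u => ∫ t in (0:ℝ)..u, E t with hFdef
  have hF : ∀ u : ℝ, HasDerivAt F (E u) u := fun u =>
    (hc.integral_hasStrictDerivAt 0 u).hasDerivAt
  have hrep : ∀ x : ℝ, E x * c₀ = F (x + δ) - F x := by
    intro x
    have h1 : E x * c₀ = ∫ t in (0:ℝ)..δ, E (x + t) := by
      rw [hc₀def, ← intervalIntegral.integral_const_mul]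
      exact intervalIntegral.integral_congr fun t _ => (hm x t).symm
    have h2 : (∫ t in (0:ℝ)..δ, E (x + t)) = ∫ t in x..(x + δ), E t := by
      simpa using intervalIntegral.integral_comp_add_left E x (a := 0) (b := δ)
    have h3 : F x + ∫ t in x..(x + δ), E t = F (x + δ) :=
      integral_add_adjacent_intervals (hint 0 x) (hint x (x + δ))
    rw [h1, h2, ← h3]; ring
  have hEeq : E = fun x => (F (x + δ) - F x) * c₀⁻¹ := by
    funext x
    rw [eq_mul_inv_iff_mul_eq₀ hc₀ne]
    exact hrep x
  have hEderiv : ∀ x : ℝ, HasDerivAt E ((E (x + δ) - E x) * c₀⁻¹) x := by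
    intro x
    have h1 : HasDerivAt (fun u : ℝ => F (u + δ)) (E (x + δ)) x :=
      HasDerivAt.comp_add_const x δ (hF (x + δ))
    have h2 := (h1.sub (hF x)).mul_const c₀⁻¹
    rwa [show (fun y => ((fun u => F (u + δ)) - F) y * c₀⁻¹) = E from hEeq.symm] at h2
  set k : ℂ := (E (0 + δ) - E 0) * c₀⁻¹ with hkdef
  have hEk : ∀ x : ℝ, HasDerivAt E (E x * k) x := by
    intro x
    have hx0 : HasDerivAt E ((E (x + δ) - E x) * c₀⁻¹) (x + 0) := by
      rw [add_zero]; exact hEderiv x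
    have hL : HasDerivAt (fun t : ℝ => E (x + t)) ((E (x + δ) - E x) * c₀⁻¹) 0 :=
      HasDerivAt.comp_const_add x 0 hx0
    have hR : HasDerivAt (fun t : ℝ => E x * E t) (E x * k) 0 := by
      rw [hkdef]; exact (hEderiv 0).const_mul (E x)
    rw [funext fun t => hm x t] at hL
    have huniq : (E (x + δ) - E x) * c₀⁻¹ = E x * k := hL.unique hR
    exact huniq ▸ hEderiv x
  refine ⟨k, fun x => ?_⟩
  set H : ℝ → ℂ := fun x => E x * Complex.exp (-(k * x)) with hHdef
  have hH : ∀ x : ℝ, HasDerivAt H 0 x := by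
    intro x
    have h1 : HasDerivAt (fun x : ℝ => -(k * (x : ℂ))) (-k) x := by
      simpa [Pi.neg_def] using (((hasDerivAt_id x).ofReal_comp).const_mul k).neg
    have h2 := h1.cexp
    have h3 := (hEk x).mul h2
    convert h3 using 1
    · rfl
    · rfl
    ring
  have hconst : H x = H 0 :=
    is_const_of_deriv_eq_zero (fun y => (hH y).differentiableAt)
      (fun y => (hH y).deriv) x 0
  rw [hHdef] at hconst
  simp only [Complex.ofReal_zero, mul_zero, neg_zero, Complex.exp_zero, mul_one, h0] at hconst
  rw [← one_mul (Complex.exp (k * ↑x)), ← hconst, mul_assoc, ← Complex.exp_add,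
    neg_add_cancel, Complex.exp_zero, mul_one]

private lemma dalembert_solution (φ : ℝ → ℂ) (hcont : Continuous φ)
    (hbdd : ∃ C, ∀ x, ‖φ x‖ ≤ C) (hne : φ ≠ 0)
    (key : ∀ x y : ℝ, φ x * φ y = (φ (x + y) + φ (x - y)) / 2) :
    ∃ c : ℝ, φ = fun x : ℝ => (Real.cos (c * x) : ℂ) := by
  -- φ 0 = 1
  obtain ⟨x₀, hx₀⟩ : ∃ x, φ x ≠ 0 := by
    by_contra h; push_neg at h; exact hne (funext h)
  have h0 : φ 0 = 1 := by
    have := key x₀ 0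
    rw [add_zero, sub_zero] at this
    have h2 : φ x₀ * φ 0 = φ x₀ * 1 := by rw [this]; ring
    exact mul_left_cancel₀ hx₀ h2
  have hev : ∀ x : ℝ, φ (-x) = φ x := by
    intro x
    have := key 0 x
    rw [zero_add, zero_sub, h0, one_mul] at this
    linear_combination (-2 : ℂ) * this
  by_cases hA : ∀ x, φ x ^ 2 = 1
  · -- φ ≡ 1
    refine ⟨0, funext fun x => ?_⟩
    have hcl : IsClosed {x : ℝ | φ x = 1} := isClosed_eq hcont continuous_const
    have hop : IsOpen {x : ℝ | φ x = 1} := by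
      have : {x : ℝ | φ x = 1} = φ ⁻¹' Metric.ball 1 1 := by
        ext t
        simp only [Set.mem_setOf_eq, Set.mem_preimage, Metric.mem_ball]
        constructor
        · intro h; rw [h]; simp
        · intro h
          have h2 := hA t
          have : (φ t - 1) * (φ t + 1) = 0 := by linear_combination h2
          rcases mul_eq_zero.1 this with h3 | h3
          · exact sub_eq_zero.1 h3
          · exfalso
            have : φ t = -1 := by linear_combination h3
            rw [this] at h
            norm_num [dist_eq_norm] at h
      rw [this]
      exact hcont.isOpen_preimage _ Metric.isOpen_ball
    have huniv : {x : ℝ | φ x = 1} = Set.univ :=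
      IsClopen.eq_univ ⟨hcl, hop⟩ ⟨0, h0⟩
    have : φ x = 1 := by
      have : x ∈ {x : ℝ | φ x = 1} := huniv ▸ Set.mem_univ x
      exact this
    rw [this]; simp
  push_neg at hA
  obtain ⟨a, ha⟩ := hA
  obtain ⟨lam, hlam⟩ := IsAlgClosed.exists_pow_nat_eq (φ a ^ 2 - 1) (n := 2) two_pos
  have hlam0 : lam ≠ 0 := by
    intro h
    exact ha (by linear_combination -hlam + lam * h)
  set g : ℝ → ℂ := fun x => (φ (x + a) - φ x * φ a) / lam with hgdef
  have hgadd : ∀ x y : ℝ, g (x + y) = g x * φ y + φ x * g y := by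
    intro x y
    have h := Lii (a := a) key x y
    simp only [hgdef]
    field_simp
    linear_combination h
  have hmulg : ∀ x y : ℝ, φ (x + y) = φ x * φ y + g x * g y := by
    intro x y
    have h := Liv (a := a) key h0 hev x y
    have h1 : g x * g y * lam ^ 2 = (φ (x + a) - φ x * φ a) * (φ (y + a) - φ y * φ a) := by
      simp only [hgdef]
      rw [div_mul_div_comm, show lam * lam = lam ^ 2 from (sq lam).symm]
      exact div_mul_cancel₀ _ (pow_ne_zero 2 hlam0)
    have h2 := h1.trans h
    rw [← hlam] at h2
    have h3 : g x * g y * lam ^ 2 = (φ (x + y) - φ x * φ y) * lam ^ 2 := by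
      linear_combination h2
    have h4 := mul_right_cancel₀ (pow_ne_zero 2 hlam0) h3
    linear_combination -h4
  have hg0 : g 0 = 0 := by simp [hgdef, h0]
  have hgodd : ∀ x : ℝ, g (-x) = - g x := by
    intro x
    have e := keyAux key a x (x + a) (-x + a) (by ring) (by ring)
    simp only [hgdef]
    rw [hev x]
    field_simp
    linear_combination (-2 : ℂ) * e
  have gcont : Continuous g :=
    ((hcont.comp (continuous_id.add continuous_const)).sub
      (hcont.mul continuous_const)).div_const lam
  set E : ℝ → ℂ := fun x => φ x + g x with hEdef
  have hE0 : E 0 = 1 := by simp [hEdef, h0, hg0]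
  have hEm : ∀ x y : ℝ, E (x + y) = E x * E y := by
    intro x y
    simp only [hEdef]
    linear_combination hgadd x y + hmulg x y
  obtain ⟨k, hk⟩ := expClass E (hcont.add gcont) hE0 hEm
  obtain ⟨C, hC⟩ := hbdd
  have hgsq : ∀ x : ℝ, g x ^ 2 = φ x ^ 2 - 1 := by
    intro x
    have h1 := hmulg x x
    have h2 := keyAux key x x (x + x) 0 (by ring) (by ring)
    rw [h0] at h2
    linear_combination -h1 - 2 * h2
  have hCg : ∀ x : ℝ, ‖g x‖ ≤ Real.sqrt (C ^ 2 + 1) := by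
    intro x
    refine Real.le_sqrt_of_sq_le ?_
    calc ‖g x‖ ^ 2 = ‖g x ^ 2‖ := (norm_pow _ 2).symm
      _ = ‖φ x ^ 2 - 1‖ := by rw [hgsq]
      _ ≤ ‖φ x ^ 2‖ + ‖(1 : ℂ)‖ := norm_sub_le _ _
      _ = ‖φ x‖ ^ 2 + 1 := by rw [norm_pow, norm_one]
      _ ≤ C ^ 2 + 1 := by
          have := pow_le_pow_left₀ (norm_nonneg (φ x)) (hC x) 2
          linarith
  have hCE : ∀ x : ℝ, ‖E x‖ ≤ C + Real.sqrt (C ^ 2 + 1) := fun x =>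
    (norm_add_le _ _).trans (add_le_add (hC x) (hCg x))
  have hkre : k.re = 0 := by
    by_contra hkre
    have hb : ∀ t : ℝ, Real.exp t ≤ C + Real.sqrt (C ^ 2 + 1) := by
      intro t
      have h1 := hCE (t / k.re)
      rw [hk, Complex.norm_exp] at h1
      have h2 : (k * ((t / k.re : ℝ) : ℂ)).re = t := by
        simp [Complex.mul_re]
        field_simp
      rwa [h2] at h1
    set M := C + Real.sqrt (C ^ 2 + 1) with hM
    have h3 := hb (M + 1)
    have h4 := Real.add_one_le_exp (M + 1)
    linarith
  set c := k.im with hcdef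
  have hkc : k = (c : ℂ) * Complex.I := by
    apply Complex.ext <;> simp [hkre, hcdef]
  refine ⟨c, funext fun x => ?_⟩
  have hphi : φ x = (E x + E (-x)) / 2 := by
    simp only [hEdef]
    rw [hev, hgodd]
    ring
  rw [hphi, hk, hk, hkc,
    show (c : ℂ) * Complex.I * ((x : ℝ) : ℂ) = ((c * x : ℝ) : ℂ) * Complex.I by
      push_cast; ring,
    show (c : ℂ) * Complex.I * (((-x : ℝ) : ℝ) : ℂ) = -((c * x : ℝ) : ℂ) * Complex.I by
      push_cast; ring,
    Complex.ofReal_cos]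
  rw [Complex.cos]

/-- The cosine class `COS(G)`: nonzero bounded continuous `φ : G → ℂ` satisfying the
d'Alembert equation `φ(x) φ(y) = (φ(x+y) + φ(x-y))/2`. -/
def CosClass (G : Type*) [AddCommGroup G] [TopologicalSpace G] : Set (G → ℂ) :=
  {φ | Continuous φ ∧ (∃ C, ∀ x, ‖φ x‖ ≤ C) ∧ φ ≠ 0 ∧
    ∀ x y, φ x * φ y = (φ (x + y) + φ (x - y)) / 2}

private lemma cos_scaled_ne (y₁ y₂ : ℝ) (h1 : 0 ≤ y₁) (hlt : y₁ < y₂)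
    (h : ∀ x : ℝ, Real.cos (2*π*y₁*x) = Real.cos (2*π*y₂*x)) : False := by
  have hy2 : 0 < y₂ := lt_of_le_of_lt h1 hlt
  have hx := h (1/(2*y₂))
  have e2 : 2*π*y₂*(1/(2*y₂)) = π := by field_simp
  have e1 : 2*π*y₁*(1/(2*y₂)) = π*(y₁/y₂) := by field_simp
  rw [e1, e2] at hx
  have h3 : π*(y₁/y₂) < π := by
    have h5 : y₁/y₂ < 1 := (div_lt_one hy2).2 hlt
    nlinarith [Real.pi_pos]
  have h4 : Real.cos π < Real.cos (π*(y₁/y₂)) := by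
    apply Real.cos_lt_cos_of_nonneg_of_le_pi ?_ le_rfl h3
    positivity
  rw [Real.cos_pi, hx, Real.cos_pi] at h4
  linarith

/-- `COS(ℝ) = { x ↦ cos(2πyx) : y ∈ [0, ∞) }` and `y ↦ (x ↦ cos(2πyx))`
is injective on `[0, ∞)`. -/
theorem cosClass_real_eq :
    CosClass ℝ = {φ : ℝ → ℂ |
      ∃ y : ℝ, 0 ≤ y ∧ φ = fun x => (Real.cos (2 * π * y * x) : ℂ)} ∧
    ∀ y₁ y₂ : ℝ, 0 ≤ y₁ → 0 ≤ y₂ →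
      (fun x : ℝ => (Real.cos (2 * π * y₁ * x) : ℂ))
        = (fun x : ℝ => (Real.cos (2 * π * y₂ * x) : ℂ)) → y₁ = y₂ := by
  constructor
  · ext φ
    constructor
    · rintro ⟨hc, hb, hn, hk⟩
      obtain ⟨c, rfl⟩ := dalembert_solution φ hc hb hn hk
      refine ⟨|c| / (2*π), by positivity, funext fun x => ?_⟩
      have hpi : (2:ℝ)*π ≠ 0 := by positivity
      have he : 2*π*(|c| / (2*π))*x = |c| * x := by rw [mul_div_cancel₀ _ hpi]
      rw [he]
      rcases abs_cases c with ⟨hc', _⟩ | ⟨hc', _⟩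
      · rw [hc']
      · rw [hc', show -c*x = -(c*x) by ring, Real.cos_neg]
    · rintro ⟨y, hy, rfl⟩
      refine ⟨?_, ⟨1, fun x => ?_⟩, ?_, fun u v => ?_⟩
      · exact Complex.continuous_ofReal.comp (Real.continuous_cos.comp (by continuity))
      · rw [Complex.norm_real, Real.norm_eq_abs]
        exact Real.abs_cos_le_one _
      · intro hzero
        have h0 := congrFun hzero 0
        simp only [mul_zero, Real.cos_zero, Pi.zero_apply, Complex.ofReal_one] at h0
        exact one_ne_zero h0
      · simp only []
        rw [show 2*π*y*(u+v) = 2*π*y*u + 2*π*y*v by ring,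
            show 2*π*y*(u-v) = 2*π*y*u - 2*π*y*v by ring,
            Real.cos_add, Real.cos_sub]
        push_cast
        ring
  · intro y₁ y₂ h1 h2 heq
    have h : ∀ x : ℝ, Real.cos (2*π*y₁*x) = Real.cos (2*π*y₂*x) := by
      intro x
      have := congrFun heq x
      exact_mod_cast this
    rcases lt_trichotomy y₁ y₂ with hlt | he | hgt
    · exact (cos_scaled_ne y₁ y₂ h1 hlt h).elim
    · exact he
    · exact (cos_scaled_ne y₂ y₁ h2 hgt (fun x => (h x).symm)).elim
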